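/- Consider the gadget construction: given a bipartite graph G = (R ∪ D, E) where E is partitioned into half-compatible edges E_H and other edges E_O, form G' by adding vertex sets A = {a_1,...,a_h} and B = {b_1,...,b_h}, adding the h disjoint edges (a_k, b_k), deleting all edges of E_H, and adding edges (r, a_k) for every r that was an endpoint of some half-compatible edge and every k, and edges (b_k, d) for every d that was an endpoint of some half-compatible edge and every k. Suppose moreover that in G every vertex of R is adjacent (via E_H or E_O) to every vertex of D (the Silver Bullet assumption restricted to these sides). Then G' has a perfect matching if and only if G has a perfect matching M with |M ∩ E_H| ≤ h. -/

import Mathlib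

/-- A matching in a bipartite graph with parts `A`, `B`: a set of pairs
no two of which share an endpoint. -/
def IsMatching {A B : Type*} (M : Finset (A × B)) : Prop :=
  ∀ e ∈ M, ∀ f ∈ M, e ≠ f → e.1 ≠ f.1 ∧ e.2 ≠ f.2

/-- A perfect matching: a matching covering every vertex on both sides. -/
def IsPerfect {A B : Type*} (M : Finset (A × B)) : Prop :=
  IsMatching M ∧ (∀ a : A, ∃ b, (a, b) ∈ M) ∧ (∀ b : B, ∃ a, (a, b) ∈ M)

lemma matching_eq_of_fst {A B : Type*} {M : Finset (A × B)} (hM : IsMatching M)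
    {e f : A × B} (he : e ∈ M) (hf : f ∈ M) (h : e.1 = f.1) : e = f := by
  by_contra hne; exact (hM e he f hf hne).1 h

lemma matching_eq_of_snd {A B : Type*} {M : Finset (A × B)} (hM : IsMatching M)
    {e f : A × B} (he : e ∈ M) (hf : f ∈ M) (h : e.2 = f.2) : e = f := by
  by_contra hne; exact (hM e he f hf hne).2 h

lemma isMatching_of_key {A B : Type*} {M : Finset (A × B)}
    (h1 : ∀ e ∈ M, ∀ f ∈ M, e.1 = f.1 → e = f)
    (h2 : ∀ e ∈ M, ∀ f ∈ M, e.2 = f.2 → e = f) : IsMatching M :=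
  fun e he f hf hne => ⟨fun h => hne (h1 e he f hf h), fun h => hne (h2 e he f hf h)⟩

/-- the gadget construction. `G'` has bipartition (R ∪ B, D ∪ A) where
B and A are each a copy of `Fin h`; half-compatible edges of G are replaced by edges
to the gadget. Under the Silver Bullet assumption (every r–d pair is joined by an edge),
G' has a perfect matching iff G has a perfect matching M with |M ∩ E_H| ≤ h. -/
theorem stmt8 {R D : Type*} [Fintype R] [Fintype D] [DecidableEq R] [DecidableEq D]
    (n h : ℕ) (hR : Fintype.card R = n) (hD : Fintype.card D = n)
    (EH EO : Finset (R × D)) (hdisj : Disjoint EH EO)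
    (hSB : ∀ r d, (r, d) ∈ EH ∪ EO)
    (E' : Finset ((R ⊕ Fin h) × (D ⊕ Fin h)))
    (hE' : ∀ x, x ∈ E' ↔
      (∃ r d, x = (Sum.inl r, Sum.inl d) ∧ (r, d) ∈ EO) ∨
      (∃ k : Fin h, x = (Sum.inr k, Sum.inr k)) ∨
      (∃ (r : R) (k : Fin h), x = (Sum.inl r, Sum.inr k) ∧ ∃ d, (r, d) ∈ EH) ∨
      (∃ (k : Fin h) (d : D), x = (Sum.inr k, Sum.inl d) ∧ ∃ r, (r, d) ∈ EH)) :
    (∃ M ⊆ E', IsPerfect M) ↔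
    (∃ M ⊆ EH ∪ EO, IsPerfect M ∧ (M ∩ EH).card ≤ h) := by
  classical
  constructor
  · -- forward direction
    rintro ⟨M', hsub, hmatch, hL, hR'⟩
    have hx4 : ∀ x ∈ M',
        (∃ r d, x = (Sum.inl r, Sum.inl d) ∧ (r, d) ∈ EO) ∨
        (∃ k : Fin h, x = (Sum.inr k, Sum.inr k)) ∨
        (∃ (r : R) (k : Fin h), x = (Sum.inl r, Sum.inr k) ∧ ∃ d, (r, d) ∈ EH) ∨
        (∃ (k : Fin h) (d : D), x = (Sum.inr k, Sum.inl d) ∧ ∃ r, (r, d) ∈ EH) :=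
      fun x hx => (hE' x).1 (hsub hx)
    set S : Finset R := Finset.univ.filter (fun r => ∃ k, (Sum.inl r, Sum.inr k) ∈ M') with hSdef
    set T : Finset D := Finset.univ.filter (fun d => ∃ k, (Sum.inr k, Sum.inl d) ∈ M') with hTdef
    set K : Finset (Fin h) := Finset.univ.filter (fun k => (Sum.inr k, Sum.inr k) ∉ M') with hKdef
    have hmemS : ∀ r, r ∈ S ↔ ∃ k, (Sum.inl r, Sum.inr k) ∈ M' := by
      intro r; simp [hSdef]
    have hmemT : ∀ d, d ∈ T ↔ ∃ k, (Sum.inr k, Sum.inl d) ∈ M' := by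
      intro d; simp [hTdef]
    have hmemK : ∀ k, k ∈ K ↔ (Sum.inr k, Sum.inr k) ∉ M' := by
      intro k; simp [hKdef]
    -- the key dichotomy at a gadget vertex
    have kiffA : ∀ k : Fin h, (∃ r, (Sum.inl r, Sum.inr k) ∈ M') ↔ (Sum.inr k, Sum.inr k) ∉ M' := by
      intro k
      constructor
      · rintro ⟨r, hr⟩ hk
        have := matching_eq_of_snd hmatch hr hk rfl
        simp at this
      · intro hk
        obtain ⟨a, ha⟩ := hR' (Sum.inr k)
        rcases a with r | k'
        · exact ⟨r, ha⟩
        · exfalso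
          rcases hx4 _ ha with ⟨r, d, hx, _⟩ | ⟨k0, hx⟩ | ⟨r, k0, hx, _⟩ | ⟨k0, d, hx, _⟩
          · exact absurd hx (by simp)
          · obtain ⟨h1, h2⟩ : k' = k0 ∧ k = k0 := by simpa using hx
            rw [h1, ← h2] at ha
            exact hk ha
          · exact absurd hx (by simp)
          · exact absurd hx (by simp)
    have kiffB : ∀ k : Fin h, (∃ d, (Sum.inr k, Sum.inl d) ∈ M') ↔ (Sum.inr k, Sum.inr k) ∉ M' := by
      intro k
      constructor
      · rintro ⟨d, hd⟩ hk
        have := matching_eq_of_fst hmatch hd hk rfl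
        simp at this
      · intro hk
        obtain ⟨b, hb⟩ := hL (Sum.inr k)
        rcases b with d | k'
        · exact ⟨d, hb⟩
        · exfalso
          rcases hx4 _ hb with ⟨r, d, hx, _⟩ | ⟨k0, hx⟩ | ⟨r, k0, hx, _⟩ | ⟨k0, d, hx, _⟩
          · exact absurd hx (by simp)
          · obtain ⟨h1, h2⟩ : k = k0 ∧ k' = k0 := by simpa using hx
            rw [h2, ← h1] at hb
            exact hk hb
          · exact absurd hx (by simp)
          · exact absurd hx (by simp)
    -- |S| = |K|
    have hSK : S.card = K.card := by
      refine Finset.card_bij (fun r hr => Classical.choose ((hmemS r).1 hr)) ?_ ?_ ?_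
      · intro r hr
        have hspec := Classical.choose_spec ((hmemS r).1 hr)
        exact (hmemK _).2 ((kiffA _).1 ⟨r, hspec⟩)
      · intro r₁ hr₁ r₂ hr₂ heq
        have h1 := Classical.choose_spec ((hmemS r₁).1 hr₁)
        have h2 := Classical.choose_spec ((hmemS r₂).1 hr₂)
        rw [heq] at h1
        have := matching_eq_of_snd hmatch h1 h2 rfl
        simpa using this
      · intro k hk
        obtain ⟨r, hr⟩ := (kiffA k).2 ((hmemK k).1 hk)
        have hrS : r ∈ S := (hmemS r).2 ⟨k, hr⟩
        refine ⟨r, hrS, ?_⟩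
        have hspec := Classical.choose_spec ((hmemS r).1 hrS)
        have := matching_eq_of_fst hmatch hspec hr rfl
        simpa using this
    have hTK : T.card = K.card := by
      refine Finset.card_bij (fun d hd => Classical.choose ((hmemT d).1 hd)) ?_ ?_ ?_
      · intro d hd
        have hspec := Classical.choose_spec ((hmemT d).1 hd)
        exact (hmemK _).2 ((kiffB _).1 ⟨d, hspec⟩)
      · intro d₁ hd₁ d₂ hd₂ heq
        have h1 := Classical.choose_spec ((hmemT d₁).1 hd₁)
        have h2 := Classical.choose_spec ((hmemT d₂).1 hd₂)
        rw [heq] at h1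
        have := matching_eq_of_fst hmatch h1 h2 rfl
        simpa using this
      · intro k hk
        obtain ⟨d, hd⟩ := (kiffB k).2 ((hmemK k).1 hk)
        have hdT : d ∈ T := (hmemT d).2 ⟨k, hd⟩
        refine ⟨d, hdT, ?_⟩
        have hspec := Classical.choose_spec ((hmemT d).1 hdT)
        have := matching_eq_of_snd hmatch hspec hd rfl
        simpa using this
    have hST : S.card = T.card := by rw [hSK, hTK]
    have hSh : S.card ≤ h := by
      rw [hSK]
      calc K.card ≤ (Finset.univ : Finset (Fin h)).card := Finset.card_le_univ K
        _ = h := by simp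
    have hcard : Fintype.card S = Fintype.card T := by
      simp [Fintype.card_coe, hST]
    let σ : S ≃ T := Fintype.equivOfCardEq hcard
    set M : Finset (R × D) := Finset.univ.filter
      (fun p : R × D => (Sum.inl p.1, Sum.inl p.2) ∈ M' ∨
        ∃ hr : p.1 ∈ S, ((σ ⟨p.1, hr⟩ : T) : D) = p.2) with hMdef
    have hmemM : ∀ (r : R) (d : D), (r, d) ∈ M ↔ ((Sum.inl r, Sum.inl d) ∈ M' ∨
        ∃ hr : r ∈ S, ((σ ⟨r, hr⟩ : T) : D) = d) := by
      intro r d; simp [hMdef]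
    -- key uniqueness lemmas for M
    have key1 : ∀ p ∈ M, ∀ q ∈ M, p.1 = q.1 → p = q := by
      rintro ⟨r, d⟩ hp ⟨r', d'⟩ hq hfst
      simp only at hfst
      subst hfst
      rcases (hmemM r d).1 hp with hp1 | ⟨hrS, hp2⟩ <;>
        rcases (hmemM r d').1 hq with hq1 | ⟨hrS', hq2⟩
      · have := matching_eq_of_fst hmatch hp1 hq1 rfl
        simpa using this
      · exfalso
        obtain ⟨k, hk⟩ := (hmemS r).1 hrS'
        have := matching_eq_of_fst hmatch hp1 hk rfl
        simp at this
      · exfalso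
        obtain ⟨k, hk⟩ := (hmemS r).1 hrS
        have := matching_eq_of_fst hmatch hq1 hk rfl
        simp at this
      · have : d = d' := by rw [← hp2, ← hq2]
        rw [this]
    have key2 : ∀ p ∈ M, ∀ q ∈ M, p.2 = q.2 → p = q := by
      rintro ⟨r, d⟩ hp ⟨r', d'⟩ hq hsnd
      simp only at hsnd
      subst hsnd
      rcases (hmemM r d).1 hp with hp1 | ⟨hrS, hp2⟩ <;>
        rcases (hmemM r' d).1 hq with hq1 | ⟨hrS', hq2⟩
      · have := matching_eq_of_snd hmatch hp1 hq1 rfl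
        simpa using this
      · exfalso
        have hdT : d ∈ T := hq2 ▸ (σ ⟨r', hrS'⟩).2
        obtain ⟨k, hk⟩ := (hmemT d).1 hdT
        have := matching_eq_of_snd hmatch hp1 hk rfl
        simp at this
      · exfalso
        have hdT : d ∈ T := hp2 ▸ (σ ⟨r, hrS⟩).2
        obtain ⟨k, hk⟩ := (hmemT d).1 hdT
        have := matching_eq_of_snd hmatch hq1 hk rfl
        simp at this
      · have hσ : σ ⟨r, hrS⟩ = σ ⟨r', hrS'⟩ := by
          apply Subtype.ext; rw [hp2, hq2]
        have : r = r' := congrArg Subtype.val (σ.injective hσ)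
        rw [this]
    refine ⟨M, ?_, ⟨isMatching_of_key key1 key2, ?_, ?_⟩, ?_⟩
    · intro p _
      have := hSB p.1 p.2
      simpa using this
    · -- left perfect
      intro r
      obtain ⟨b, hb⟩ := hL (Sum.inl r)
      rcases b with d | k
      · exact ⟨d, (hmemM r d).2 (Or.inl hb)⟩
      · have hrS : r ∈ S := (hmemS r).2 ⟨k, hb⟩
        exact ⟨(σ ⟨r, hrS⟩ : T), (hmemM r _).2 (Or.inr ⟨hrS, rfl⟩)⟩
    · -- right perfect
      intro d
      obtain ⟨a, ha⟩ := hR' (Sum.inl d)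
      rcases a with r | k
      · exact ⟨r, (hmemM r d).2 (Or.inl ha)⟩
      · have hdT : d ∈ T := (hmemT d).2 ⟨k, ha⟩
        refine ⟨(σ.symm ⟨d, hdT⟩ : S), (hmemM _ d).2 (Or.inr ⟨(σ.symm ⟨d, hdT⟩).2, ?_⟩)⟩
        show ((σ (σ.symm ⟨d, hdT⟩) : T) : D) = d
        rw [Equiv.apply_symm_apply]
    · -- cardinality bound
      calc (M ∩ EH).card ≤ S.card := by
            refine Finset.card_le_card_of_injOn Prod.fst ?_ ?_
            · intro p hp
              obtain ⟨hpM, hpEH⟩ := Finset.mem_inter.mp hp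
              rcases (hmemM p.1 p.2).1 hpM with h1 | ⟨hrS, _⟩
              · exfalso
                rcases hx4 _ h1 with ⟨r, d, hx, hEO⟩ | ⟨k0, hx⟩ | ⟨r, k0, hx, _⟩ | ⟨k0, d, hx, _⟩
                · obtain ⟨h1', h2'⟩ : p.1 = r ∧ p.2 = d := by simpa using hx
                  have hpEO : p ∈ EO := by
                    rw [← Prod.mk.eta (p := p), h1', h2']; exact hEO
                  exact Finset.disjoint_left.mp hdisj hpEH hpEO
                · exact absurd hx (by simp)
                · exact absurd hx (by simp)
                · exact absurd hx (by simp)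
              · exact hrS
            · intro p hp q hq hpq
              exact key1 p (Finset.mem_inter.mp hp).1 q (Finset.mem_inter.mp hq).1 hpq
        _ ≤ h := hSh
  · -- backward direction
    rintro ⟨M, hsub, ⟨hmatch, hL, hR'⟩, hcard⟩
    set F : Finset (R × D) := M ∩ EH with hFdef
    have hFM : ∀ e : F, (e : R × D) ∈ M := fun e => (Finset.mem_inter.mp e.2).1
    have hFH : ∀ e : F, (e : R × D) ∈ EH := fun e => (Finset.mem_inter.mp e.2).2
    have hFle : Fintype.card F ≤ h := by
      rw [Fintype.card_coe]; exact hcard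
    let φ : F → Fin h := fun e => Fin.castLE hFle (Fintype.equivFin F e)
    have φinj : Function.Injective φ :=
      (Fin.castLE_injective hFle).comp (Fintype.equivFin F).injective
    set M' : Finset ((R ⊕ Fin h) × (D ⊕ Fin h)) := Finset.univ.filter
      (fun x => (∃ r d, x = (Sum.inl r, Sum.inl d) ∧ (r, d) ∈ M \ EH) ∨
        (∃ e : F, x = (Sum.inl (e : R × D).1, Sum.inr (φ e))) ∨
        (∃ e : F, x = (Sum.inr (φ e), Sum.inl (e : R × D).2)) ∨
        (∃ k : Fin h, x = (Sum.inr k, Sum.inr k) ∧ ∀ e : F, φ e ≠ k)) with hM'def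
    have hmemM' : ∀ x, x ∈ M' ↔
        ((∃ r d, x = (Sum.inl r, Sum.inl d) ∧ (r, d) ∈ M \ EH) ∨
        (∃ e : F, x = (Sum.inl (e : R × D).1, Sum.inr (φ e))) ∨
        (∃ e : F, x = (Sum.inr (φ e), Sum.inl (e : R × D).2)) ∨
        (∃ k : Fin h, x = (Sum.inr k, Sum.inr k) ∧ ∀ e : F, φ e ≠ k)) := by
      intro x; simp [hM'def]
    have key1 : ∀ x ∈ M', ∀ y ∈ M', x.1 = y.1 → x = y := by
      intro x hx y hy hfst
      rcases (hmemM' x).1 hx with ⟨r, d, rfl, hm⟩ | ⟨e, rfl⟩ | ⟨e, rfl⟩ | ⟨k, rfl, hk⟩ <;>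
        rcases (hmemM' y).1 hy with ⟨r', d', rfl, hm'⟩ | ⟨e', rfl⟩ | ⟨e', rfl⟩ | ⟨k', rfl, hk'⟩ <;>
        simp only [Prod.mk.injEq] <;> try simp at hfst
      · -- 1,1
        have hr : r = r' := by simpa using hfst
        subst hr
        have := matching_eq_of_fst hmatch (Finset.mem_sdiff.mp hm).1 (Finset.mem_sdiff.mp hm').1 rfl
        simpa using this
      · -- 1,2
        exfalso
        have hr : r = (e' : R × D).1 := by simpa using hfst
        have heq : (r, d) = (e' : R × D) :=
          matching_eq_of_fst hmatch (Finset.mem_sdiff.mp hm).1 (hFM e') hr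
        exact (Finset.mem_sdiff.mp hm).2 (heq ▸ hFH e')
      · -- 2,1
        exfalso
        have hr : (e : R × D).1 = r' := by simpa using hfst
        have heq : (e : R × D) = (r', d') :=
          matching_eq_of_fst hmatch (hFM e) (Finset.mem_sdiff.mp hm').1 hr
        exact (Finset.mem_sdiff.mp hm').2 (heq ▸ hFH e)
      · -- 2,2
        have hr : (e : R × D).1 = (e' : R × D).1 := by simpa using hfst
        have : e = e' := Subtype.ext (matching_eq_of_fst hmatch (hFM e) (hFM e') hr)
        subst this; simp
      · -- 3,3
        have hk : φ e = φ e' := by simpa using hfst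
        have : e = e' := φinj hk
        subst this; simp
      · -- 3,4
        exfalso
        exact hk' e (by simpa using hfst)
      · -- 4,3
        exfalso
        exact hk e' (by simpa using hfst.symm)
      · -- 4,4
        have : k = k' := by simpa using hfst
        simp [this]
    have key2 : ∀ x ∈ M', ∀ y ∈ M', x.2 = y.2 → x = y := by
      intro x hx y hy hsnd
      rcases (hmemM' x).1 hx with ⟨r, d, rfl, hm⟩ | ⟨e, rfl⟩ | ⟨e, rfl⟩ | ⟨k, rfl, hk⟩ <;>
        rcases (hmemM' y).1 hy with ⟨r', d', rfl, hm'⟩ | ⟨e', rfl⟩ | ⟨e', rfl⟩ | ⟨k', rfl, hk'⟩ <;>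
        simp only [Prod.mk.injEq] <;> try simp at hsnd
      · -- 1,1
        have hd : d = d' := by simpa using hsnd
        subst hd
        have := matching_eq_of_snd hmatch (Finset.mem_sdiff.mp hm).1 (Finset.mem_sdiff.mp hm').1 rfl
        simpa using this
      · -- 1,3
        exfalso
        have hd : d = (e' : R × D).2 := by simpa using hsnd
        have heq : (r, d) = (e' : R × D) :=
          matching_eq_of_snd hmatch (Finset.mem_sdiff.mp hm).1 (hFM e') hd
        exact (Finset.mem_sdiff.mp hm).2 (heq ▸ hFH e')
      · -- 2,2
        have hk : φ e = φ e' := by simpa using hsnd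
        have : e = e' := φinj hk
        subst this; simp
      · -- 2,4
        exfalso
        exact hk' e (by simpa using hsnd)
      · -- 3,1
        exfalso
        have hd : (e : R × D).2 = d' := by simpa using hsnd
        have heq : (e : R × D) = (r', d') :=
          matching_eq_of_snd hmatch (hFM e) (Finset.mem_sdiff.mp hm').1 hd
        exact (Finset.mem_sdiff.mp hm').2 (heq ▸ hFH e)
      · -- 3,3
        have hd : (e : R × D).2 = (e' : R × D).2 := by simpa using hsnd
        have : e = e' := Subtype.ext (matching_eq_of_snd hmatch (hFM e) (hFM e') hd)
        subst this; simp
      · -- 4,2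
        exfalso
        exact hk e' (by simpa using hsnd.symm)
      · -- 4,4
        have : k = k' := by simpa using hsnd
        simp [this]
    refine ⟨M', ?_, isMatching_of_key key1 key2, ?_, ?_⟩
    · -- M' ⊆ E'
      intro x hx
      rw [hE']
      rcases (hmemM' x).1 hx with ⟨r, d, rfl, hm⟩ | ⟨e, rfl⟩ | ⟨e, rfl⟩ | ⟨k, rfl, hk⟩
      · refine Or.inl ⟨r, d, rfl, ?_⟩
        obtain ⟨hM, hnH⟩ := Finset.mem_sdiff.mp hm
        rcases Finset.mem_union.mp (hsub hM) with h' | h'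
        · exact absurd h' hnH
        · exact h'
      · exact Or.inr (Or.inr (Or.inl ⟨(e : R × D).1, φ e, rfl, ⟨(e : R × D).2, by simpa using hFH e⟩⟩))
      · exact Or.inr (Or.inr (Or.inr ⟨φ e, (e : R × D).2, rfl, ⟨(e : R × D).1, by simpa using hFH e⟩⟩))
      · exact Or.inr (Or.inl ⟨k, rfl⟩)
    · -- left perfect
      intro a
      rcases a with r | k
      · obtain ⟨d, hd⟩ := hL r
        by_cases hH : (r, d) ∈ EH
        · have heF : (r, d) ∈ F := Finset.mem_inter.mpr ⟨hd, hH⟩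
          exact ⟨Sum.inr (φ ⟨(r, d), heF⟩),
            (hmemM' _).2 (Or.inr (Or.inl ⟨⟨(r, d), heF⟩, rfl⟩))⟩
        · exact ⟨Sum.inl d, (hmemM' _).2 (Or.inl ⟨r, d, rfl, Finset.mem_sdiff.mpr ⟨hd, hH⟩⟩)⟩
      · by_cases hk : ∃ e : F, φ e = k
        · obtain ⟨e, rfl⟩ := hk
          exact ⟨Sum.inl (e : R × D).2, (hmemM' _).2 (Or.inr (Or.inr (Or.inl ⟨e, rfl⟩)))⟩
        · push_neg at hk
          exact ⟨Sum.inr k, (hmemM' _).2 (Or.inr (Or.inr (Or.inr ⟨k, rfl, hk⟩)))⟩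
    · -- right perfect
      intro b
      rcases b with d | k
      · obtain ⟨r, hr⟩ := hR' d
        by_cases hH : (r, d) ∈ EH
        · have heF : (r, d) ∈ F := Finset.mem_inter.mpr ⟨hr, hH⟩
          exact ⟨Sum.inr (φ ⟨(r, d), heF⟩),
            (hmemM' _).2 (Or.inr (Or.inr (Or.inl ⟨⟨(r, d), heF⟩, rfl⟩)))⟩
        · exact ⟨Sum.inl r, (hmemM' _).2 (Or.inl ⟨r, d, rfl, Finset.mem_sdiff.mpr ⟨hr, hH⟩⟩)⟩
      · by_cases hk : ∃ e : F, φ e = k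
        · obtain ⟨e, rfl⟩ := hk
          exact ⟨Sum.inl (e : R × D).1, (hmemM' _).2 (Or.inr (Or.inl ⟨e, rfl⟩))⟩
        · push_neg at hk
          exact ⟨Sum.inr k, (hmemM' _).2 (Or.inr (Or.inr (Or.inr ⟨k, rfl, hk⟩)))⟩
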